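/- Let E = EuclideanSpace ℝ (Fin n), ξ ∈ E with ‖ξ‖ = 1, and μ a Borel probability measure on E satisfying the standing integrability assumption whose topological support is not contained in any affine line {p + tξ : t ∈ ℝ} (p ∈ E). Let (β_m) be a sequence in [0, 1) converging to 1 and, for each m, let q_m ∈ E be a minimizer of G_{β_m ξ}. Then for every x ∈ E, ‖q_m − x‖ → ∞ as m → ∞. (Euclidean case of Theorem 6.1(b): extreme quantiles escape every bounded set.) -/

import Mathlib

open MeasureTheory Filter Topology

/-- The data-based geometric quantile loss in Euclidean space:
`ρ_u(x,p) = ‖p − x‖ − ⟪u, p − x⟫`. -/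
noncomputable def quantileLoss {n : ℕ} (u x p : EuclideanSpace ℝ (Fin n)) : ℝ :=
  ‖p - x‖ - inner ℝ u (p - x)

/-- The topological support of a measure: points all of whose neighbourhoods have
positive measure. -/
def measSupport {α : Type*} [TopologicalSpace α] [MeasurableSpace α]
    (μ : Measure α) : Set α :=
  {x | ∀ U ∈ nhds x, μ U ≠ 0}

section aux
variable {n : ℕ} {μ : Measure (EuclideanSpace ℝ (Fin n))} [IsProbabilityMeasure μ]

lemma ql_nonneg' {u x p : EuclideanSpace ℝ (Fin n)} (hu : ‖u‖ ≤ 1) :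
    0 ≤ quantileLoss u x p := by
  have h := real_inner_le_norm u (p - x)
  simp only [quantileLoss]
  nlinarith [norm_nonneg (p - x), mul_le_mul_of_nonneg_right hu (norm_nonneg (p - x))]

lemma ql_lower {u x p : EuclideanSpace ℝ (Fin n)} :
    (1 - ‖u‖) * ‖p - x‖ ≤ quantileLoss u x p := by
  have h := real_inner_le_norm u (p - x)
  simp only [quantileLoss]; nlinarith

lemma ql_cont (u p : EuclideanSpace ℝ (Fin n)) :
    Continuous (fun x => quantileLoss u x p) := by
  simp only [quantileLoss]
  exact (continuous_const.sub continuous_id).norm.sub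
    ((continuous_const.inner (continuous_const.sub continuous_id)))

/-- Finite first moment from the standing assumption. -/
lemma moment_integrable {u₀ p₀ : EuclideanSpace ℝ (Fin n)} (hu : ‖u₀‖ < 1)
    (hint : Integrable (fun x => quantileLoss u₀ x p₀) μ) :
    Integrable (fun x : EuclideanSpace ℝ (Fin n) => ‖x‖) μ := by
  have hpos : (0:ℝ) < 1 - ‖u₀‖ := by linarith
  have hg : Integrable
      (fun x => (1 - ‖u₀‖)⁻¹ * quantileLoss u₀ x p₀ + ‖p₀‖) μ :=
    (hint.const_mul _).add (integrable_const _)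
  refine hg.mono' (continuous_norm.aestronglyMeasurable) ?_
  filter_upwards with x
  have h1 := ql_lower (u := u₀) (x := x) (p := p₀)
  have h2 : ‖x‖ - ‖p₀‖ ≤ ‖p₀ - x‖ := by
    linarith [norm_sub_norm_le x p₀, (norm_sub_rev x p₀).le, (norm_sub_rev x p₀).ge]
  rw [Real.norm_eq_abs, abs_of_nonneg (norm_nonneg _), ← sub_le_iff_le_add]
  rw [← le_div_iff₀' hpos] at h1
  calc ‖x‖ - ‖p₀‖ ≤ ‖p₀ - x‖ := h2
    _ ≤ quantileLoss u₀ x p₀ / (1 - ‖u₀‖) := h1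
    _ = (1 - ‖u₀‖)⁻¹ * quantileLoss u₀ x p₀ := by rw [div_eq_inv_mul]

lemma ql_integrable (hM : Integrable (fun x : EuclideanSpace ℝ (Fin n) => ‖x‖) μ)
    {u : EuclideanSpace ℝ (Fin n)} (hu : ‖u‖ ≤ 1) (p : EuclideanSpace ℝ (Fin n)) :
    Integrable (fun x => quantileLoss u x p) μ := by
  refine ((hM.const_mul 2).add (integrable_const (2 * ‖p‖))).mono'
    (ql_cont u p).aestronglyMeasurable ?_
  filter_upwards with x
  have h0 : (0:ℝ) ≤ quantileLoss u x p := ql_nonneg' hu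
  have h1 : quantileLoss u x p ≤ 2 * ‖p - x‖ := by
    have h' := abs_real_inner_le_norm u (p - x)
    rw [abs_le] at h'
    simp only [quantileLoss]
    nlinarith [mul_le_mul_of_nonneg_right hu (norm_nonneg (p-x))]
  rw [Real.norm_eq_abs, abs_of_nonneg h0]
  have : ‖p - x‖ ≤ ‖p‖ + ‖x‖ := norm_sub_le _ _
  simp only [Pi.add_apply]
  linarith

lemma inner_integrable (hM : Integrable (fun x : EuclideanSpace ℝ (Fin n) => ‖x‖) μ)
    (ξ p : EuclideanSpace ℝ (Fin n)) :
    Integrable (fun x => (inner ℝ ξ (p - x) : ℝ)) μ := by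
  refine ((hM.const_mul ‖ξ‖).add (integrable_const (‖ξ‖ * ‖p‖))).mono'
    ((continuous_const.inner (continuous_const.sub continuous_id)).aestronglyMeasurable) ?_
  filter_upwards with x
  calc ‖(inner ℝ ξ (p - x) : ℝ)‖ ≤ ‖ξ‖ * ‖p - x‖ := norm_inner_le_norm _ _
    _ ≤ ‖ξ‖ * (‖p‖ + ‖x‖) :=
        mul_le_mul_of_nonneg_left (norm_sub_le _ _) (norm_nonneg _)
    _ = ‖ξ‖ * ‖x‖ + ‖ξ‖ * ‖p‖ := by ring

lemma G_smul (hM : Integrable (fun x : EuclideanSpace ℝ (Fin n) => ‖x‖) μ)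
    {ξ : EuclideanSpace ℝ (Fin n)} (hξ : ‖ξ‖ = 1) (β : ℝ)
    (p : EuclideanSpace ℝ (Fin n)) :
    ∫ x, quantileLoss (β • ξ) x p ∂μ
      = (∫ x, quantileLoss ξ x p ∂μ) + (1 - β) * ∫ x, (inner ℝ ξ (p - x) : ℝ) ∂μ := by
  have h1 : Integrable (fun x => quantileLoss ξ x p) μ :=
    ql_integrable hM hξ.le p
  have h2 : Integrable (fun x => (1 - β) * (inner ℝ ξ (p - x) : ℝ)) μ :=
    (inner_integrable hM ξ p).const_mul _
  have : ∀ x, quantileLoss (β • ξ) x p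
      = quantileLoss ξ x p + (1 - β) * inner ℝ ξ (p - x) := by
    intro x; simp only [quantileLoss, real_inner_smul_left]; ring
  rw [show (fun x => quantileLoss (β • ξ) x p)
      = fun x => quantileLoss ξ x p + (1 - β) * inner ℝ ξ (p - x) from funext this]
  rw [integral_add h1 h2, integral_const_mul]

lemma inner_integral_bound (hM : Integrable (fun x : EuclideanSpace ℝ (Fin n) => ‖x‖) μ)
    {ξ : EuclideanSpace ℝ (Fin n)} (hξ : ‖ξ‖ = 1) (p : EuclideanSpace ℝ (Fin n)) :
    |∫ x, (inner ℝ ξ (p - x) : ℝ) ∂μ| ≤ ‖p‖ + ∫ x, ‖x‖ ∂μ := by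
  have h := norm_integral_le_integral_norm (μ := μ) (fun x => (inner ℝ ξ (p - x) : ℝ))
  rw [Real.norm_eq_abs] at h
  refine h.trans ?_
  have hle : ∀ x : EuclideanSpace ℝ (Fin n),
      ‖(inner ℝ ξ (p - x) : ℝ)‖ ≤ ‖p‖ + ‖x‖ := by
    intro x
    calc ‖(inner ℝ ξ (p - x) : ℝ)‖ ≤ ‖ξ‖ * ‖p - x‖ := norm_inner_le_norm _ _
      _ = ‖p - x‖ := by rw [hξ, one_mul]
      _ ≤ ‖p‖ + ‖x‖ := norm_sub_le _ _
  calc ∫ x, ‖(inner ℝ ξ (p - x) : ℝ)‖ ∂μ ≤ ∫ x, (‖p‖ + ‖x‖) ∂μ := by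
        refine integral_mono ((inner_integrable hM ξ p).norm) ?_ hle
        exact (integrable_const _).add hM
    _ = ‖p‖ + ∫ x, ‖x‖ ∂μ := by
        rw [integral_add (integrable_const _) hM, integral_const]
        simp

/-- Continuity of `p ↦ G_ξ(p)`. -/
lemma G_cont (hM : Integrable (fun x : EuclideanSpace ℝ (Fin n) => ‖x‖) μ)
    {ξ : EuclideanSpace ℝ (Fin n)} (hξ : ‖ξ‖ = 1) :
    Continuous (fun p => ∫ x, quantileLoss ξ x p ∂μ) := by
  have hlip : LipschitzWith 2 (fun p => ∫ x, quantileLoss ξ x p ∂μ) := by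
    refine LipschitzWith.of_dist_le_mul ?_
    intro p p'
    rw [Real.dist_eq]
    have hpt : ∀ x : EuclideanSpace ℝ (Fin n),
        |quantileLoss ξ x p - quantileLoss ξ x p'| ≤ 2 * ‖p - p'‖ := by
      intro x
      have h1 : |‖p - x‖ - ‖p' - x‖| ≤ ‖p - p'‖ := by
        have := abs_norm_sub_norm_le (p - x) (p' - x)
        simpa [sub_sub_sub_cancel_right] using this
      have h2 : |(inner ℝ ξ (p - x) : ℝ) - inner ℝ ξ (p' - x)| ≤ ‖p - p'‖ := by
        rw [← inner_sub_right]
        have := abs_real_inner_le_norm ξ (p - x - (p' - x))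
        rw [hξ, one_mul] at this
        simpa [sub_sub_sub_cancel_right] using this
      simp only [quantileLoss]
      calc |‖p - x‖ - inner ℝ ξ (p - x) - (‖p' - x‖ - inner ℝ ξ (p' - x))|
          = |(‖p - x‖ - ‖p' - x‖) - ((inner ℝ ξ (p - x) : ℝ) - inner ℝ ξ (p' - x))| := by
            ring_nf
        _ ≤ |‖p - x‖ - ‖p' - x‖| + |(inner ℝ ξ (p - x) : ℝ) - inner ℝ ξ (p' - x)| :=
            abs_sub _ _
        _ ≤ 2 * ‖p - p'‖ := by linarith
    have hi1 := ql_integrable hM hξ.le p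
    have hi2 := ql_integrable hM hξ.le p'
    rw [← integral_sub hi1 hi2]
    have := norm_integral_le_integral_norm (μ := μ)
      (fun x => quantileLoss ξ x p - quantileLoss ξ x p')
    rw [Real.norm_eq_abs] at this
    refine this.trans ?_
    calc ∫ x, ‖quantileLoss ξ x p - quantileLoss ξ x p'‖ ∂μ
        ≤ ∫ _x, 2 * ‖p - p'‖ ∂μ := by
          refine integral_mono (hi1.sub hi2).norm (integrable_const _) ?_
          intro x; exact hpt x
      _ = 2 * ‖p - p'‖ := by simp
      _ = 2 * dist p p' := by rw [dist_eq_norm]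
  exact hlip.continuous

lemma line_closed (p ξ : EuclideanSpace ℝ (Fin n)) :
    IsClosed {y : EuclideanSpace ℝ (Fin n) | ∃ t : ℝ, y = p + t • ξ} := by
  have : {y : EuclideanSpace ℝ (Fin n) | ∃ t : ℝ, y = p + t • ξ}
      = (fun y => y - p) ⁻¹' (Submodule.span ℝ {ξ} : Set (EuclideanSpace ℝ (Fin n))) := by
    ext y
    simp only [Set.mem_setOf_eq, Set.mem_preimage, SetLike.mem_coe,
      Submodule.mem_span_singleton]
    constructor
    · rintro ⟨t, rfl⟩; exact ⟨t, by abel⟩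
    · rintro ⟨t, ht⟩
      refine ⟨t, ?_⟩
      have : p + t • ξ = p + (y - p) := by rw [ht]
      rw [this]; abel
  rw [this]
  exact (Submodule.span ℝ {ξ}).closed_of_finiteDimensional.preimage
    (continuous_id.sub continuous_const)

/-- If `G_ξ(p) = 0` then the support of `μ` lies on the line `p + ℝξ`. -/
lemma G_zero_support (hM : Integrable (fun x : EuclideanSpace ℝ (Fin n) => ‖x‖) μ)
    {ξ : EuclideanSpace ℝ (Fin n)} (hξ : ‖ξ‖ = 1) {p : EuclideanSpace ℝ (Fin n)}
    (h0 : ∫ x, quantileLoss ξ x p ∂μ = 0) :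
    measSupport μ ⊆ {y | ∃ t : ℝ, y = p + t • ξ} := by
  have hnn : (0 : (EuclideanSpace ℝ (Fin n)) → ℝ) ≤ fun x => quantileLoss ξ x p :=
    fun x => ql_nonneg' hξ.le
  have hae : (fun x => quantileLoss ξ x p) =ᶠ[ae μ] 0 :=
    (integral_eq_zero_iff_of_nonneg hnn (ql_integrable hM hξ.le p)).mp h0
  set L := {y : EuclideanSpace ℝ (Fin n) | ∃ t : ℝ, y = p + t • ξ} with hL
  have hmemL : ∀ᵐ x ∂μ, x ∈ L := by
    filter_upwards [hae] with x hx
    simp only [Pi.zero_apply] at hx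
    have hinner : (inner ℝ ξ (p - x) : ℝ) = ‖p - x‖ := by
      simp only [quantileLoss] at hx; linarith
    have : (inner ℝ ξ (p - x) : ℝ) = ‖ξ‖ * ‖p - x‖ := by rw [hξ, one_mul, hinner]
    rw [inner_eq_norm_mul_iff_real] at this
    rw [hξ, one_smul] at this
    refine ⟨-‖p - x‖, ?_⟩
    have hx2 : p + -‖p - x‖ • ξ = p - ‖p - x‖ • ξ := by
      rw [neg_smul]; abel
    rw [hx2, this]; abel
  have hcompl : μ Lᶜ = 0 := by
    have : {x | ¬ (x ∈ L)} = Lᶜ := rfl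
    rw [← this]
    exact hmemL
  intro y hy
  by_contra hyL
  exact hy Lᶜ ((line_closed p ξ).isOpen_compl.mem_nhds hyL) hcompl

lemma inner_shift {ξ x : EuclideanSpace ℝ (Fin n)} (hξ : ‖ξ‖ = 1) (k : ℝ) :
    (inner ℝ ξ (k • ξ - x) : ℝ) = k - inner ℝ ξ x := by
  rw [inner_sub_right, real_inner_smul_right, real_inner_self_eq_norm_sq, hξ]
  ring

lemma G_ray_tendsto_zero (hM : Integrable (fun x : EuclideanSpace ℝ (Fin n) => ‖x‖) μ)
    {ξ : EuclideanSpace ℝ (Fin n)} (hξ : ‖ξ‖ = 1) :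
    Tendsto (fun k : ℕ => ∫ x, quantileLoss ξ x ((k : ℝ) • ξ) ∂μ) atTop (nhds 0) := by
  have key := tendsto_integral_of_dominated_convergence
    (μ := μ) (F := fun (k : ℕ) x => quantileLoss ξ x ((k : ℝ) • ξ))
    (f := fun _ => (0 : ℝ)) (bound := fun x => 2 * ‖x‖)
    (fun k => (ql_cont ξ _).aestronglyMeasurable)
    (hM.const_mul 2)
    ?_ ?_
  · simpa using key
  · intro k
    filter_upwards with x
    have h0 : 0 ≤ quantileLoss ξ x ((k : ℝ) • ξ) := ql_nonneg' hξ.le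
    rw [Real.norm_eq_abs, abs_of_nonneg h0]
    have h1 : ‖(k : ℝ) • ξ - x‖ ≤ (k : ℝ) + ‖x‖ := by
      calc ‖(k : ℝ) • ξ - x‖ ≤ ‖(k : ℝ) • ξ‖ + ‖x‖ := norm_sub_le _ _
        _ = (k : ℝ) + ‖x‖ := by
          rw [norm_smul, hξ, Real.norm_eq_abs, abs_of_nonneg (Nat.cast_nonneg k)]; ring
    have h2 : (inner ℝ ξ x : ℝ) ≤ ‖x‖ := by
      have := abs_real_inner_le_norm ξ x
      rw [hξ, one_mul, abs_le] at this
      linarith [this.2]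
    simp only [quantileLoss, inner_shift hξ]
    linarith
  · filter_upwards with x
    refine squeeze_zero' ?_ ?_ (g := fun k : ℕ => ‖x‖ ^ 2 / ((k : ℝ) - ‖x‖)) ?_
    · filter_upwards with k; exact ql_nonneg' hξ.le
    · have hx : ∀ᶠ k : ℕ in atTop, ‖x‖ + 1 ≤ (k : ℝ) :=
        (tendsto_natCast_atTop_atTop (R := ℝ)).eventually_ge_atTop _
      filter_upwards [hx] with k hk
      set t : ℝ := inner ℝ ξ x with ht
      have htb : |t| ≤ ‖x‖ := by
        have := abs_real_inner_le_norm ξ x; rwa [hξ, one_mul] at this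
      rw [abs_le] at htb
      have ha : (0:ℝ) < (k : ℝ) - ‖x‖ := by linarith
      have hk0 : (0:ℝ) ≤ (k:ℝ) := Nat.cast_nonneg k
      have hnormsq : ‖(k : ℝ) • ξ - x‖ ^ 2 = (k:ℝ)^2 - 2 * k * t + ‖x‖^2 := by
        rw [norm_sub_sq_real, norm_smul, real_inner_smul_left, hξ]
        rw [Real.norm_eq_abs, abs_of_nonneg hk0]
        ring
      have hv0 : (0:ℝ) ≤ ‖(k : ℝ) • ξ - x‖ := norm_nonneg _
      have hF : 0 ≤ ‖(k : ℝ) • ξ - x‖ - ((k:ℝ) - t) := by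
        have := ql_nonneg' (u := ξ) (x := x) (p := (k:ℝ) • ξ) hξ.le
        rw [quantileLoss, inner_shift hξ, ← ht] at this
        linarith
      have hprod : (‖(k : ℝ) • ξ - x‖ - ((k:ℝ) - t)) * (‖(k : ℝ) • ξ - x‖ + ((k:ℝ) - t))
          = ‖x‖^2 - t^2 := by linear_combination hnormsq
      have h5 : (k:ℝ) - ‖x‖ ≤ ‖(k : ℝ) • ξ - x‖ + ((k:ℝ) - t) := by
        linarith [htb.2]
      have h6 := mul_le_mul_of_nonneg_left h5 hF
      rw [hprod] at h6
      rw [quantileLoss, inner_shift hξ, ← ht, le_div_iff₀ ha]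
      nlinarith [sq_nonneg t, h6]
    · refine Tendsto.div_atTop tendsto_const_nhds ?_
      exact tendsto_atTop_add_const_right _ _ tendsto_natCast_atTop_atTop

end aux

/-- Euclidean case of Theorem 6.1(b): along any sequence `β_m → 1⁻`, the corresponding
`(β_m ξ)`-quantiles escape every bounded set. -/
theorem extreme_quantiles_escape_to_infinity
    {n : ℕ} (μ : Measure (EuclideanSpace ℝ (Fin n))) [IsProbabilityMeasure μ]
    (hμint : ∃ (u₀ p₀ : EuclideanSpace ℝ (Fin n)), ‖u₀‖ < 1 ∧
      Integrable (fun x => quantileLoss u₀ x p₀) μ)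
    (ξ : EuclideanSpace ℝ (Fin n)) (hξ : ‖ξ‖ = 1)
    (hsupp : ¬ ∃ p : EuclideanSpace ℝ (Fin n),
      measSupport μ ⊆ {y | ∃ t : ℝ, y = p + t • ξ})
    (β : ℕ → ℝ) (hβ : ∀ m, β m ∈ Set.Ico (0 : ℝ) 1)
    (hβlim : Tendsto β atTop (nhds 1))
    (q : ℕ → EuclideanSpace ℝ (Fin n))
    (hq : ∀ m, ∀ p, ∫ x, quantileLoss (β m • ξ) x (q m) ∂μ
        ≤ ∫ x, quantileLoss (β m • ξ) x p ∂μ) :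
    ∀ x : EuclideanSpace ℝ (Fin n), Tendsto (fun m => ‖q m - x‖) atTop atTop := by
  intro x₀
  obtain ⟨u₀, p₀, hu₀, hint⟩ := hμint
  have hM : Integrable (fun x : EuclideanSpace ℝ (Fin n) => ‖x‖) μ :=
    moment_integrable hu₀ hint
  set M : ℝ := ∫ x, ‖x‖ ∂μ with hMdef
  have hM0 : 0 ≤ M := integral_nonneg fun x => norm_nonneg x
  have hGpos : ∀ p : EuclideanSpace ℝ (Fin n), 0 < ∫ x, quantileLoss ξ x p ∂μ := by
    intro p
    rcases (integral_nonneg (μ := μ) (f := fun x => quantileLoss ξ x p) (fun x => ql_nonneg' (x := x) (p := p) hξ.le)).lt_or_eq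
      with h | h
    · exact h
    · exact absurd ⟨p, G_zero_support hM hξ h.symm⟩ hsupp
  rw [tendsto_atTop]
  intro b
  set C : ℝ := max b 0 with hCdef
  have hC0 : 0 ≤ C := le_max_right _ _
  -- minimum of G_ξ on the closed ball
  obtain ⟨pmin, hpmem, hpmin⟩ :=
    (isCompact_closedBall x₀ C).exists_isMinOn
      (Metric.nonempty_closedBall.mpr hC0) (G_cont hM hξ).continuousOn
  set ε : ℝ := ∫ x, quantileLoss ξ x pmin ∂μ with hεdef
  have hε : 0 < ε := hGpos pmin
  -- choose R on the ray with small loss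
  have hray := G_ray_tendsto_zero hM hξ
  obtain ⟨R, hR⟩ : ∃ R : ℕ, ∫ x, quantileLoss ξ x ((R : ℝ) • ξ) ∂μ < ε / 3 := by
    have := hray.eventually (eventually_lt_nhds (show (0:ℝ) < ε / 3 by linarith))
    exact this.exists
  -- eventual smallness of 1 - β m
  have h1m : Tendsto (fun m => 1 - β m) atTop (nhds 0) := by
    have h := ((tendsto_const_nhds :
      Tendsto (fun _ : ℕ => (1:ℝ)) atTop (nhds 1)).sub hβlim)
    simpa using h
  have hev1 : ∀ᶠ m in atTop, (1 - β m) * ((R : ℝ) + M) < ε / 3 := by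
    have h := h1m.mul_const ((R : ℝ) + M)
    rw [zero_mul] at h
    exact h.eventually (eventually_lt_nhds (show (0:ℝ) < ε / 3 by linarith))
  have hev2 : ∀ᶠ m in atTop, (1 - β m) * (‖x₀‖ + C + M) < ε / 3 := by
    have h := h1m.mul_const (‖x₀‖ + C + M)
    rw [zero_mul] at h
    exact h.eventually (eventually_lt_nhds (show (0:ℝ) < ε / 3 by linarith))
  filter_upwards [hev1, hev2] with m hm1 hm2
  by_contra hcon
  push_neg at hcon
  have hble : b ≤ C := le_max_left _ _
  have hqm : q m ∈ Metric.closedBall x₀ C := by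
    rw [Metric.mem_closedBall, dist_eq_norm]
    linarith
  have hεle : ε ≤ ∫ x, quantileLoss ξ x (q m) ∂μ := hpmin hqm
  have hqnorm : ‖q m‖ ≤ ‖x₀‖ + C := by
    have h1 : ‖q m‖ - ‖x₀‖ ≤ ‖q m - x₀‖ := norm_sub_norm_le _ _
    have h2 : ‖q m - x₀‖ ≤ C := by
      rw [← dist_eq_norm]; exact Metric.mem_closedBall.mp hqm
    linarith
  have hβm := hβ m
  simp only [Set.mem_Ico] at hβm
  have hδ : 0 < 1 - β m := by linarith [hβm.2]
  have e1 := G_smul hM hξ (β m) (q m)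
  have e2 := G_smul hM hξ (β m) ((R : ℝ) • ξ)
  have b1 := inner_integral_bound hM hξ (q m)
  have b2 := inner_integral_bound hM hξ ((R : ℝ) • ξ)
  have hRnorm : ‖(R : ℝ) • ξ‖ = (R : ℝ) := by
    rw [norm_smul, hξ, Real.norm_eq_abs, abs_of_nonneg (Nat.cast_nonneg R)]; ring
  rw [hRnorm] at b2
  rw [abs_le] at b1 b2
  rw [← hMdef] at b1 b2
  have hmain := hq m ((R : ℝ) • ξ)
  -- combine
  have c1 : (1 - β m) * (∫ x, (inner ℝ ξ (q m - x) : ℝ) ∂μ)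
      ≥ (1 - β m) * (-(‖q m‖ + M)) :=
    mul_le_mul_of_nonneg_left b1.1 hδ.le
  have c2 : (1 - β m) * (∫ x, (inner ℝ ξ ((R : ℝ) • ξ - x) : ℝ) ∂μ)
      ≤ (1 - β m) * ((R : ℝ) + M) :=
    mul_le_mul_of_nonneg_left b2.2 hδ.le
  have c3 : (1 - β m) * (‖q m‖ + M) ≤ (1 - β m) * (‖x₀‖ + C + M) :=
    mul_le_mul_of_nonneg_left (by linarith) hδ.le
  rw [e1, e2] at hmain
  have c4 : (1 - β m) * (-(‖q m‖ + M)) ≥ -((1 - β m) * (‖x₀‖ + C + M)) := by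
    linarith [c3, mul_neg (1 - β m) (‖q m‖ + M)]
  linarith [hεle, hR, hm1, hm2, hmain, c1, c2, c4]
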